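/- Let (y_n), (t_n), (x_n) be sequences with |x_n| ~ n, |t_n| ~ n, |y_n| ~ log n, and define ξ_n = y_n − log(y_n) + log(t_n). Suppose y_{n+1} − y_n = 1/x_n + O(1/x_n²), log(y_{n+1}) − log(y_n) = 1/(x_n y_n) + O(1/(x_n² y_n), 1/(x_n y_n²)), log(t_{n+1}) − log(t_n) = −1/t_n + O(1/t_n²), and 1/x_n − 1/t_n = 1/(x_n y_n) + O(1/(x_n y_n²), 1/x_n^{4/3}). Then |ξ_{n+1} − ξ_n| = O(1/(n log² n)), hence Σ|ξ_{n+1} − ξ_n| < ∞ and ξ_n converges. -/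

import Mathlib

open Filter Topology

lemma aux_nlogsq_summable :
    Summable (fun n : ℕ => 1 / ((n : ℝ) * Real.log n ^ 2)) := by
  set f : ℕ → ℝ := fun n => if n ≤ 1 then (2 : ℝ) else 1 / ((n : ℝ) * Real.log n ^ 2) with hf
  have hlog2 : (0.6931471803 : ℝ) < Real.log 2 := Real.log_two_gt_d9
  have hmono : ∀ n : ℕ, 2 ≤ n → (2 : ℝ) * Real.log 2 ^ 2 ≤ (n : ℝ) * Real.log n ^ 2 := by
    intro n hn
    have h2 : (2 : ℝ) ≤ (n : ℝ) := by exact_mod_cast hn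
    have hl : Real.log 2 ≤ Real.log n := Real.log_le_log (by norm_num) h2
    have hl0 : (0 : ℝ) ≤ Real.log 2 := by linarith
    nlinarith [sq_nonneg (Real.log n - Real.log 2)]
  have hfsum : Summable f := by
    rw [← summable_condensed_iff_of_nonneg]
    · have base : Summable (fun n : ℕ => (1 / Real.log 2 ^ 2) * (1 / (n : ℝ) ^ 2)) :=
        (Real.summable_one_div_nat_pow.mpr (by norm_num)).mul_left _
      have base1 : Summable (fun n : ℕ => (1 / Real.log 2 ^ 2) * (1 / ((n : ℝ) + 1) ^ 2)) := by
        have := (summable_nat_add_iff 1).mpr base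
        apply this.congr
        intro n
        push_cast
        ring
      rw [← summable_nat_add_iff 1]
      apply base1.congr
      intro n
      have hne : ¬ (2 ^ (n + 1) ≤ 1) := by
        have : 1 < 2 ^ (n + 1) := Nat.one_lt_two_pow (by omega)
        omega
      simp only [hf]
      rw [if_neg hne]
      push_cast
      rw [Real.log_pow]
      have h2 : (0:ℝ) < (2:ℝ) ^ (n + 1) := by positivity
      field_simp
      push_cast
      ring
    · intro n
      simp only [hf]
      split
      · norm_num
      · positivity
    · intro m n hm hmn
      simp only [hf]
      rcases le_or_gt n 1 with hn1 | hn1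
      · rw [if_pos (le_trans hmn hn1), if_pos hn1]
      · rw [if_neg (by omega)]
        have hn2 : 2 ≤ n := by omega
        rcases le_or_gt m 1 with hm1 | hm1
        · rw [if_pos hm1]
          have := hmono n hn2
          have hpos : (0:ℝ) < (n : ℝ) * Real.log n ^ 2 := by
            have : (0:ℝ) < (2:ℝ) * Real.log 2 ^ 2 := by nlinarith
            linarith
          rw [div_le_iff₀ hpos]
          nlinarith
        · rw [if_neg (by omega)]
          have hm2 : 2 ≤ m := by omega
          have h2m : (2:ℝ) ≤ (m:ℝ) := by exact_mod_cast hm2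
          have hmn' : (m:ℝ) ≤ (n:ℝ) := by exact_mod_cast hmn
          have hlm : (0:ℝ) < Real.log m := Real.log_pos (by linarith)
          have hln : Real.log m ≤ Real.log n := Real.log_le_log (by linarith) hmn'
          have hsq : Real.log m ^ 2 ≤ Real.log n ^ 2 := by nlinarith
          have key : (m:ℝ) * Real.log m ^ 2 ≤ (n:ℝ) * Real.log n ^ 2 :=
            mul_le_mul hmn' hsq (by positivity) (by positivity)
          exact one_div_le_one_div_of_le (by nlinarith) key
  rw [← summable_nat_add_iff 2]
  have := (summable_nat_add_iff 2).mpr hfsum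
  apply this.congr
  intro n
  simp only [hf]
  rw [if_neg (by omega)]

set_option maxHeartbeats 1000000 in
theorem xi_cauchy_and_converges (x t y : ℕ → ℂ) (cx ct cy : ℝ)
    (hcx : 0 < cx) (hct : 0 < ct) (hcy : 0 < cy)
    (hx : Tendsto (fun n : ℕ => ‖x n‖ / n) atTop (𝓝 cx))
    (ht : Tendsto (fun n : ℕ => ‖t n‖ / n) atTop (𝓝 ct))
    (hy : Tendsto (fun n : ℕ => ‖y n‖ / Real.log n) atTop (𝓝 cy))
    (h1 : ∃ C : ℝ, ∃ N : ℕ, ∀ n ≥ N,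
      ‖y (n + 1) - y n - 1 / x n‖ ≤ C * (1 / ‖x n‖ ^ 2))
    (h2 : ∃ C : ℝ, ∃ N : ℕ, ∀ n ≥ N,
      ‖Complex.log (y (n + 1)) - Complex.log (y n) - 1 / (x n * y n)‖ ≤
        C * (1 / (‖x n‖ ^ 2 * ‖y n‖) + 1 / (‖x n‖ * ‖y n‖ ^ 2)))
    (h3 : ∃ C : ℝ, ∃ N : ℕ, ∀ n ≥ N,
      ‖Complex.log (t (n + 1)) - Complex.log (t n) + 1 / t n‖ ≤ C * (1 / ‖t n‖ ^ 2))
    (h4 : ∃ C : ℝ, ∃ N : ℕ, ∀ n ≥ N,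
      ‖1 / x n - 1 / t n - 1 / (x n * y n)‖ ≤
        C * (1 / (‖x n‖ * ‖y n‖ ^ 2) + 1 / ‖x n‖ ^ ((4 : ℝ) / 3))) :
    (∃ C' : ℝ, ∃ N' : ℕ, ∀ n ≥ N',
      ‖(y (n + 1) - Complex.log (y (n + 1)) + Complex.log (t (n + 1))) -
        (y n - Complex.log (y n) + Complex.log (t n))‖ ≤
        C' * (1 / (n * (Real.log n) ^ 2))) ∧
    (Summable fun n : ℕ =>
      ‖(y (n + 1) - Complex.log (y (n + 1)) + Complex.log (t (n + 1))) -
        (y n - Complex.log (y n) + Complex.log (t n))‖) ∧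
    ∃ l : ℂ, Tendsto (fun n : ℕ => y n - Complex.log (y n) + Complex.log (t n))
      atTop (𝓝 l) := by
  obtain ⟨C1, N1, hb1⟩ := h1
  obtain ⟨C2, N2, hb2⟩ := h2
  obtain ⟨C3, N3, hb3⟩ := h3
  obtain ⟨C4, N4, hb4⟩ := h4
  set a : ℝ := cx / 2 with ha
  set b : ℝ := cy / 2 with hb
  set c : ℝ := ct / 2 with hc
  have ha0 : 0 < a := by positivity
  have hb0 : 0 < b := by positivity
  have hc0 : 0 < c := by positivity
  -- eventual lower bounds
  have Ex : ∀ᶠ n : ℕ in atTop, a * n ≤ ‖x n‖ := by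
    filter_upwards [hx.eventually_const_lt (show a < cx by simp [ha]; linarith),
      eventually_ge_atTop 1] with n h1 h2
    have hn : (0 : ℝ) < n := by exact_mod_cast h2
    rw [lt_div_iff₀ hn] at h1
    exact h1.le
  have Et : ∀ᶠ n : ℕ in atTop, c * n ≤ ‖t n‖ := by
    filter_upwards [ht.eventually_const_lt (show c < ct by simp [hc]; linarith),
      eventually_ge_atTop 1] with n h1 h2
    have hn : (0 : ℝ) < n := by exact_mod_cast h2
    rw [lt_div_iff₀ hn] at h1
    exact h1.le
  have Elog1 : ∀ᶠ n : ℕ in atTop, 1 ≤ Real.log n :=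
    (Real.tendsto_log_atTop.comp tendsto_natCast_atTop_atTop).eventually_ge_atTop 1
  have Ey : ∀ᶠ n : ℕ in atTop, b * Real.log n ≤ ‖y n‖ := by
    filter_upwards [hy.eventually_const_lt (show b < cy by simp [hb]; linarith),
      Elog1] with n h1 h2
    have hn : (0 : ℝ) < Real.log n := by linarith
    rw [lt_div_iff₀ hn] at h1
    exact h1.le
  have Esq : ∀ᶠ n : ℕ in atTop, Real.log n ^ 2 ≤ (n : ℝ) ^ ((1 : ℝ) / 3) := by
    have hlo := isLittleO_log_rpow_atTop (show (0 : ℝ) < 1 / 6 by norm_num)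
    have hbd := hlo.bound one_pos
    filter_upwards [tendsto_natCast_atTop_atTop.eventually hbd, Elog1,
      eventually_ge_atTop 1] with n h1 hL hn1
    have hn : (1 : ℝ) ≤ (n : ℝ) := by exact_mod_cast hn1
    have hnn : (0 : ℝ) ≤ (n : ℝ) := by linarith
    rw [one_mul, Real.norm_eq_abs, Real.norm_eq_abs,
      abs_of_nonneg (by linarith : (0:ℝ) ≤ Real.log n),
      abs_of_nonneg (Real.rpow_nonneg hnn _)] at h1
    calc Real.log n ^ 2 ≤ ((n : ℝ) ^ ((1:ℝ)/6)) ^ 2 :=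
          pow_le_pow_left₀ (by linarith) h1 2
      _ = (n : ℝ) ^ ((1 : ℝ) / 3) := by
          rw [← Real.rpow_natCast ((n:ℝ) ^ ((1:ℝ)/6)) 2, ← Real.rpow_mul hnn]
          norm_num
  set D1 : ℝ := max C1 0 with hD1
  set D2 : ℝ := max C2 0 with hD2
  set D3 : ℝ := max C3 0 with hD3
  set D4 : ℝ := max C4 0 with hD4
  set K : ℝ := D1 * (1 / a ^ 2) + D2 * (1 / (a ^ 2 * b) + 1 / (a * b ^ 2)) +
      D3 * (1 / c ^ 2) + D4 * (1 / (a * b ^ 2) + 1 / a ^ ((4 : ℝ) / 3)) with hK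
  have key : ∀ᶠ n : ℕ in atTop,
      ‖(y (n + 1) - Complex.log (y (n + 1)) + Complex.log (t (n + 1))) -
        (y n - Complex.log (y n) + Complex.log (t n))‖ ≤
      K * (1 / ((n : ℝ) * (Real.log n) ^ 2)) := by
    filter_upwards [Ex, Et, Ey, Elog1, Esq, eventually_ge_atTop 1,
      eventually_ge_atTop N1, eventually_ge_atTop N2,
      eventually_ge_atTop N3, eventually_ge_atTop N4]
      with n hxn htn hyn hL1 hsq hn1 hN1 hN2 hN3 hN4
    have hn : (1 : ℝ) ≤ (n : ℝ) := by exact_mod_cast hn1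
    have npos : (0 : ℝ) < (n : ℝ) := by linarith
    set L : ℝ := Real.log n with hLdef
    have h13 : (n : ℝ) ^ ((1 : ℝ) / 3) ≤ (n : ℝ) := by
      calc (n : ℝ) ^ ((1:ℝ)/3) ≤ (n : ℝ) ^ (1:ℝ) :=
            Real.rpow_le_rpow_of_exponent_le hn (by norm_num)
        _ = (n : ℝ) := Real.rpow_one _
    have hL2n : L ^ 2 ≤ (n : ℝ) := le_trans hsq h13
    have hLn : L ≤ (n : ℝ) := by nlinarith
    have hxpos : (0 : ℝ) < ‖x n‖ := lt_of_lt_of_le (by positivity) hxn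
    have htpos : (0 : ℝ) < ‖t n‖ := lt_of_lt_of_le (by positivity) htn
    have hypos : (0 : ℝ) < ‖y n‖ := lt_of_lt_of_le (by positivity) hyn
    set P : ℝ := 1 / ((n : ℝ) * L ^ 2) with hP
    have hPpos : (0 : ℝ) < P := by positivity
    -- term bounds
    have T1 : 1 / ‖x n‖ ^ 2 ≤ (1 / a ^ 2) * P := by
      have hx2 : (a * n) ^ 2 ≤ ‖x n‖ ^ 2 := pow_le_pow_left₀ (by positivity) hxn 2
      have h : a ^ 2 * ((n : ℝ) * L ^ 2) ≤ ‖x n‖ ^ 2 := by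
        calc a ^ 2 * ((n : ℝ) * L ^ 2) ≤ a ^ 2 * ((n : ℝ) * (n : ℝ)) := by gcongr
          _ = (a * n) ^ 2 := by ring
          _ ≤ ‖x n‖ ^ 2 := hx2
      calc 1 / ‖x n‖ ^ 2 ≤ 1 / (a ^ 2 * ((n : ℝ) * L ^ 2)) :=
            one_div_le_one_div_of_le (by positivity) h
        _ = (1 / a ^ 2) * P := by rw [hP, one_div_mul_one_div]
    have T4 : 1 / ‖t n‖ ^ 2 ≤ (1 / c ^ 2) * P := by
      have ht2 : (c * n) ^ 2 ≤ ‖t n‖ ^ 2 := pow_le_pow_left₀ (by positivity) htn 2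
      have h : c ^ 2 * ((n : ℝ) * L ^ 2) ≤ ‖t n‖ ^ 2 := by
        calc c ^ 2 * ((n : ℝ) * L ^ 2) ≤ c ^ 2 * ((n : ℝ) * (n : ℝ)) := by gcongr
          _ = (c * n) ^ 2 := by ring
          _ ≤ ‖t n‖ ^ 2 := ht2
      calc 1 / ‖t n‖ ^ 2 ≤ 1 / (c ^ 2 * ((n : ℝ) * L ^ 2)) :=
            one_div_le_one_div_of_le (by positivity) h
        _ = (1 / c ^ 2) * P := by rw [hP, one_div_mul_one_div]
    have T2 : 1 / (‖x n‖ ^ 2 * ‖y n‖) ≤ (1 / (a ^ 2 * b)) * P := by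
      have hprod : (a * n) ^ 2 * (b * L) ≤ ‖x n‖ ^ 2 * ‖y n‖ := by
        apply mul_le_mul _ hyn (by positivity) (by positivity)
        exact pow_le_pow_left₀ (by positivity) hxn 2
      have h : (a ^ 2 * b) * ((n : ℝ) * L ^ 2) ≤ ‖x n‖ ^ 2 * ‖y n‖ := by
        calc (a ^ 2 * b) * ((n : ℝ) * L ^ 2) = (a ^ 2 * b) * ((n : ℝ) * (L * L)) := by ring
          _ ≤ (a ^ 2 * b) * ((n : ℝ) * ((n : ℝ) * L)) := by gcongr
          _ = (a * n) ^ 2 * (b * L) := by ring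
          _ ≤ ‖x n‖ ^ 2 * ‖y n‖ := hprod
      calc 1 / (‖x n‖ ^ 2 * ‖y n‖) ≤ 1 / ((a ^ 2 * b) * ((n : ℝ) * L ^ 2)) :=
            one_div_le_one_div_of_le (by positivity) h
        _ = (1 / (a ^ 2 * b)) * P := by rw [hP, one_div_mul_one_div]
    have T3 : 1 / (‖x n‖ * ‖y n‖ ^ 2) ≤ (1 / (a * b ^ 2)) * P := by
      have hy2 : (b * L) ^ 2 ≤ ‖y n‖ ^ 2 := pow_le_pow_left₀ (by positivity) hyn 2
      have h : (a * b ^ 2) * ((n : ℝ) * L ^ 2) ≤ ‖x n‖ * ‖y n‖ ^ 2 := by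
        calc (a * b ^ 2) * ((n : ℝ) * L ^ 2) = (a * n) * (b * L) ^ 2 := by ring
          _ ≤ ‖x n‖ * ‖y n‖ ^ 2 := mul_le_mul hxn hy2 (by positivity) (norm_nonneg _)
      calc 1 / (‖x n‖ * ‖y n‖ ^ 2) ≤ 1 / ((a * b ^ 2) * ((n : ℝ) * L ^ 2)) :=
            one_div_le_one_div_of_le (by positivity) h
        _ = (1 / (a * b ^ 2)) * P := by rw [hP, one_div_mul_one_div]
    have T5 : 1 / ‖x n‖ ^ ((4 : ℝ) / 3) ≤ (1 / a ^ ((4 : ℝ) / 3)) * P := by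
      have h1 : (a * n) ^ ((4 : ℝ) / 3) ≤ ‖x n‖ ^ ((4 : ℝ) / 3) :=
        Real.rpow_le_rpow (by positivity) hxn (by norm_num)
      have h2 : (a * n) ^ ((4 : ℝ) / 3) = a ^ ((4 : ℝ) / 3) * (n : ℝ) ^ ((4 : ℝ) / 3) :=
        Real.mul_rpow ha0.le npos.le
      have h3 : (n : ℝ) ^ ((4 : ℝ) / 3) = (n : ℝ) * (n : ℝ) ^ ((1 : ℝ) / 3) := by
        rw [show ((4 : ℝ) / 3) = 1 + 1 / 3 by norm_num, Real.rpow_add npos, Real.rpow_one]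
      have hapos : (0 : ℝ) < a ^ ((4 : ℝ) / 3) := Real.rpow_pos_of_pos ha0 _
      have h : a ^ ((4 : ℝ) / 3) * ((n : ℝ) * L ^ 2) ≤ ‖x n‖ ^ ((4 : ℝ) / 3) := by
        rw [h2, h3] at h1
        calc a ^ ((4 : ℝ) / 3) * ((n : ℝ) * L ^ 2)
            ≤ a ^ ((4 : ℝ) / 3) * ((n : ℝ) * (n : ℝ) ^ ((1 : ℝ) / 3)) := by gcongr
          _ ≤ ‖x n‖ ^ ((4 : ℝ) / 3) := h1
      calc 1 / ‖x n‖ ^ ((4 : ℝ) / 3) ≤ 1 / (a ^ ((4 : ℝ) / 3) * ((n : ℝ) * L ^ 2)) :=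
            one_div_le_one_div_of_le (by positivity) h
        _ = (1 / a ^ ((4 : ℝ) / 3)) * P := by rw [hP, one_div_mul_one_div]
    -- hypothesis bounds with nonneg constants
    have A1 : ‖y (n + 1) - y n - 1 / x n‖ ≤ D1 * ((1 / a ^ 2) * P) := by
      calc ‖y (n + 1) - y n - 1 / x n‖ ≤ C1 * (1 / ‖x n‖ ^ 2) := hb1 n hN1
        _ ≤ D1 * (1 / ‖x n‖ ^ 2) :=
            mul_le_mul_of_nonneg_right (le_max_left _ _) (by positivity)
        _ ≤ D1 * ((1 / a ^ 2) * P) :=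
            mul_le_mul_of_nonneg_left T1 (le_max_right _ _)
    have A2 : ‖Complex.log (y (n + 1)) - Complex.log (y n) - 1 / (x n * y n)‖ ≤
        D2 * ((1 / (a ^ 2 * b)) * P + (1 / (a * b ^ 2)) * P) := by
      calc ‖Complex.log (y (n + 1)) - Complex.log (y n) - 1 / (x n * y n)‖
          ≤ C2 * (1 / (‖x n‖ ^ 2 * ‖y n‖) + 1 / (‖x n‖ * ‖y n‖ ^ 2)) := hb2 n hN2
        _ ≤ D2 * (1 / (‖x n‖ ^ 2 * ‖y n‖) + 1 / (‖x n‖ * ‖y n‖ ^ 2)) :=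
            mul_le_mul_of_nonneg_right (le_max_left _ _) (by positivity)
        _ ≤ D2 * ((1 / (a ^ 2 * b)) * P + (1 / (a * b ^ 2)) * P) :=
            mul_le_mul_of_nonneg_left (add_le_add T2 T3) (le_max_right _ _)
    have A3 : ‖Complex.log (t (n + 1)) - Complex.log (t n) + 1 / t n‖ ≤
        D3 * ((1 / c ^ 2) * P) := by
      calc ‖Complex.log (t (n + 1)) - Complex.log (t n) + 1 / t n‖
          ≤ C3 * (1 / ‖t n‖ ^ 2) := hb3 n hN3
        _ ≤ D3 * (1 / ‖t n‖ ^ 2) :=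
            mul_le_mul_of_nonneg_right (le_max_left _ _) (by positivity)
        _ ≤ D3 * ((1 / c ^ 2) * P) := mul_le_mul_of_nonneg_left T4 (le_max_right _ _)
    have A4 : ‖1 / x n - 1 / t n - 1 / (x n * y n)‖ ≤
        D4 * ((1 / (a * b ^ 2)) * P + (1 / a ^ ((4 : ℝ) / 3)) * P) := by
      calc ‖1 / x n - 1 / t n - 1 / (x n * y n)‖
          ≤ C4 * (1 / (‖x n‖ * ‖y n‖ ^ 2) + 1 / ‖x n‖ ^ ((4 : ℝ) / 3)) := hb4 n hN4
        _ ≤ D4 * (1 / (‖x n‖ * ‖y n‖ ^ 2) + 1 / ‖x n‖ ^ ((4 : ℝ) / 3)) := by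
            apply mul_le_mul_of_nonneg_right (le_max_left _ _)
            have : (0:ℝ) < ‖x n‖ ^ ((4 : ℝ) / 3) := Real.rpow_pos_of_pos hxpos _
            positivity
        _ ≤ D4 * ((1 / (a * b ^ 2)) * P + (1 / a ^ ((4 : ℝ) / 3)) * P) :=
            mul_le_mul_of_nonneg_left (add_le_add T3 T5) (le_max_right _ _)
    have hdec : (y (n + 1) - Complex.log (y (n + 1)) + Complex.log (t (n + 1))) -
        (y n - Complex.log (y n) + Complex.log (t n)) =
        (y (n + 1) - y n - 1 / x n) -
        (Complex.log (y (n + 1)) - Complex.log (y n) - 1 / (x n * y n)) +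
        (Complex.log (t (n + 1)) - Complex.log (t n) + 1 / t n) +
        (1 / x n - 1 / t n - 1 / (x n * y n)) := by ring
    rw [hdec]
    have htri : ‖(y (n + 1) - y n - 1 / x n) -
        (Complex.log (y (n + 1)) - Complex.log (y n) - 1 / (x n * y n)) +
        (Complex.log (t (n + 1)) - Complex.log (t n) + 1 / t n) +
        (1 / x n - 1 / t n - 1 / (x n * y n))‖ ≤
        ‖y (n + 1) - y n - 1 / x n‖ +
        ‖Complex.log (y (n + 1)) - Complex.log (y n) - 1 / (x n * y n)‖ +
        ‖Complex.log (t (n + 1)) - Complex.log (t n) + 1 / t n‖ +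
        ‖1 / x n - 1 / t n - 1 / (x n * y n)‖ := by
      calc _ ≤ ‖(y (n + 1) - y n - 1 / x n) -
              (Complex.log (y (n + 1)) - Complex.log (y n) - 1 / (x n * y n)) +
              (Complex.log (t (n + 1)) - Complex.log (t n) + 1 / t n)‖ +
              ‖1 / x n - 1 / t n - 1 / (x n * y n)‖ := norm_add_le _ _
        _ ≤ ‖(y (n + 1) - y n - 1 / x n) -
              (Complex.log (y (n + 1)) - Complex.log (y n) - 1 / (x n * y n))‖ +
              ‖Complex.log (t (n + 1)) - Complex.log (t n) + 1 / t n‖ +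
              ‖1 / x n - 1 / t n - 1 / (x n * y n)‖ := by
            gcongr; exact norm_add_le _ _
        _ ≤ _ := by gcongr; exact norm_sub_le _ _
    calc _ ≤ _ := htri
      _ ≤ D1 * ((1 / a ^ 2) * P) +
          D2 * ((1 / (a ^ 2 * b)) * P + (1 / (a * b ^ 2)) * P) +
          D3 * ((1 / c ^ 2) * P) +
          D4 * ((1 / (a * b ^ 2)) * P + (1 / a ^ ((4 : ℝ) / 3)) * P) := by
            exact add_le_add (add_le_add (add_le_add A1 A2) A3) A4
      _ = K * (1 / ((n : ℝ) * (Real.log n) ^ 2)) := by rw [hK, hP]; ring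
  rw [eventually_atTop] at key
  obtain ⟨N', hN'⟩ := key
  refine ⟨⟨K, N', hN'⟩, ?_, ?_⟩
  · -- summability
    rw [← summable_nat_add_iff N']
    apply Summable.of_nonneg_of_le (fun n => norm_nonneg _)
      (fun n => hN' (n + N') (by omega))
    exact (summable_nat_add_iff N').mpr (aux_nlogsq_summable.mul_left K)
  · -- convergence
    have hsum : Summable fun n : ℕ =>
        ‖(y (n + 1) - Complex.log (y (n + 1)) + Complex.log (t (n + 1))) -
          (y n - Complex.log (y n) + Complex.log (t n))‖ := by
      rw [← summable_nat_add_iff N']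
      apply Summable.of_nonneg_of_le (fun n => norm_nonneg _)
        (fun n => hN' (n + N') (by omega))
      exact (summable_nat_add_iff N').mpr (aux_nlogsq_summable.mul_left K)
    have hcs : CauchySeq (fun n : ℕ => y n - Complex.log (y n) + Complex.log (t n)) := by
      apply cauchySeq_of_summable_dist
      apply hsum.congr
      intro n
      rw [dist_eq_norm, norm_sub_rev]
    exact cauchySeq_tendsto_of_complete hcs
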